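/- Let ψp, ψm, W0 be as above and suppose the compatibility condition (ψp'' + 2·W0·ψp')·ψm + (ψm'' - 2·W0·ψm')·ψp - 2·ψp'·ψm' = 0 holds on I. Then Ṽ = (W0 + W1p - W1m)² + (W0 + W1p - W1m)' equals Ṽ0 - 2·W1m' pointwise, where Ṽ0 = W0² + W0', W1p = ψp'/ψp, W1m = ψm'/ψm. -/

import Mathlib

/-- Under the compatibility condition (cc12) with `ε = 0`, the extended partner
potential `Ṽ = W² + W'` reduces to `Ṽ0 - 2 W1m'` where `Ṽ0 = W0² + W0'`. -/
theorem compatibility_reduces_Vtilde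
    (I : Set ℝ) (hI : IsOpen I) (ψp ψm W0 : ℝ → ℝ)
    (hp1 : ∀ x ∈ I, DifferentiableAt ℝ ψp x)
    (hp2 : ∀ x ∈ I, DifferentiableAt ℝ (deriv ψp) x)
    (hm1 : ∀ x ∈ I, DifferentiableAt ℝ ψm x)
    (hm2 : ∀ x ∈ I, DifferentiableAt ℝ (deriv ψm) x)
    (h0 : ∀ x ∈ I, DifferentiableAt ℝ W0 x)
    (hpne : ∀ x ∈ I, ψp x ≠ 0) (hmne : ∀ x ∈ I, ψm x ≠ 0)
    (hcc : ∀ x ∈ I,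
      (deriv (deriv ψp) x + 2 * W0 x * deriv ψp x) * ψm x
        + (deriv (deriv ψm) x - 2 * W0 x * deriv ψm x) * ψp x
        - 2 * deriv ψp x * deriv ψm x = 0) :
    ∀ x ∈ I,
      (W0 x + deriv ψp x / ψp x - deriv ψm x / ψm x) ^ 2
        + deriv (fun y => W0 y + deriv ψp y / ψp y - deriv ψm y / ψm y) x =
      (W0 x ^ 2 + deriv W0 x) - 2 * deriv (fun y => deriv ψm y / ψm y) x := by
  intro x hx
  have hp1x := hp1 x hx
  have hp2x := hp2 x hx
  have hm1x := hm1 x hx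
  have hm2x := hm2 x hx
  have h0x := h0 x hx
  have hpn := hpne x hx
  have hmn := hmne x hx
  have hdp : DifferentiableAt ℝ (fun y => deriv ψp y / ψp y) x := hp2x.div hp1x hpn
  have hdm : DifferentiableAt ℝ (fun y => deriv ψm y / ψm y) x := hm2x.div hm1x hmn
  have key := hcc x hx
  rw [deriv_fun_sub (h0x.fun_add hdp) hdm, deriv_fun_add h0x hdp,
    deriv_fun_div hp2x hp1x hpn, deriv_fun_div hm2x hm1x hmn]
  field_simp
  linear_combination (ψp x) * (ψm x) * key
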